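/- Let X be a topological space. The collection of all sets of the form B(f, ε) = {g ∈ C(X) : |f(x) − g(x)| < ε(x) for every x ∈ X}, where f ranges over C(X) and ε ranges over the lower semicontinuous functions from X to the open interval (0,1), is a base for the graph topology τ_Γ on C(X). -/

import Mathlib

open TopologicalSpace Set

/-- The graph of a continuous map, as a subset of `X × Y`. -/
def graphSet {X Y : Type*} [TopologicalSpace X] [TopologicalSpace Y] (f : C(X, Y)) :
    Set (X × Y) := {p | p.2 = f p.1}

/-- The graph topology `τ_Γ` on `C(X, Y)`, generated by the sets
`F_G = {f | graph f ⊆ G}` for `G` open in `X × Y`. -/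
def graphTopology (X Y : Type*) [TopologicalSpace X] [TopologicalSpace Y] :
    TopologicalSpace C(X, Y) :=
  generateFrom {S | ∃ G : Set (X × Y), IsOpen G ∧ S = {f : C(X, Y) | graphSet f ⊆ G}}

/-- Key construction: from an open `G` containing the graph of `g`, produce a lsc `ε`. -/
lemma key_construction {X : Type*} [TopologicalSpace X] (G : Set (X × ℝ)) (hG : IsOpen G)
    (g : C(X, ℝ)) (hg : graphSet g ⊆ G) :
    ∃ ε : X → ℝ, LowerSemicontinuous ε ∧ (∀ x, ε x ∈ Set.Ioo (0 : ℝ) 1) ∧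
      ∀ h : C(X, ℝ), (∀ x, |g x - h x| < ε x) → graphSet h ⊆ G := by
  have hx : ∀ x : X, ∃ (V : Set X) (δ : ℝ), IsOpen V ∧ x ∈ V ∧ 0 < δ ∧
      (∀ y ∈ V, |g y - g x| < δ / 2) ∧ ∀ y ∈ V, ∀ t : ℝ, |t - g x| < δ → (y, t) ∈ G := by
    intro x
    have hmem : (x, g x) ∈ G := hg (by simp [graphSet])
    have hnh : G ∈ nhds (x, g x) := hG.mem_nhds hmem
    rw [mem_nhds_prod_iff] at hnh
    obtain ⟨u, hu, v, hv, huv⟩ := hnh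
    obtain ⟨δ, hδ, hball⟩ := Metric.mem_nhds_iff.mp hv
    obtain ⟨u', hu'u, hu'open, hxu'⟩ := mem_nhds_iff.mp hu
    refine ⟨u' ∩ g ⁻¹' Metric.ball (g x) (δ / 2), δ, hu'open.inter
      (g.continuous.isOpen_preimage _ Metric.isOpen_ball), ⟨hxu', by simp [hδ]⟩, hδ, ?_, ?_⟩
    · intro y hy
      have := hy.2
      simpa [Metric.mem_ball, Real.dist_eq] using this
    · intro y hy t ht
      exact huv ⟨hu'u hy.1, hball (by simpa [Metric.mem_ball, Real.dist_eq] using ht)⟩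
  choose V δ hVopen hxV hδpos hclose hin using hx
  set c : X → ℝ := fun x => min (1 / 2) (δ x / 2) with hc
  have hcpos : ∀ x, 0 < c x := fun x => lt_min (by norm_num) (by linarith [hδpos x])
  have hcle : ∀ x, c x ≤ 1 / 2 := fun x => min_le_left _ _
  set ε : X → ℝ := fun y => sSup (c '' {x | y ∈ V x}) with hε
  have hne : ∀ y : X, (c '' {x | y ∈ V x}).Nonempty := fun y => ⟨c y, y, hxV y, rfl⟩
  have hbdd : ∀ y : X, BddAbove (c '' {x | y ∈ V x}) := by
    intro y
    refine ⟨1 / 2, ?_⟩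
    rintro _ ⟨x, -, rfl⟩
    exact hcle x
  have hεge : ∀ y x, y ∈ V x → c x ≤ ε y := fun y x hy => le_csSup (hbdd y) ⟨x, hy, rfl⟩
  refine ⟨ε, ?_, ?_, ?_⟩
  · intro y₀ b hb
    obtain ⟨_, ⟨x, hx', rfl⟩, hbx⟩ := exists_lt_of_lt_csSup (hne y₀) hb
    filter_upwards [(hVopen x).mem_nhds hx'] with y hy
    exact lt_of_lt_of_le hbx (hεge y x hy)
  · intro y
    constructor
    · exact lt_of_lt_of_le (hcpos y) (hεge y y (hxV y))
    · have : ε y ≤ 1 / 2 := csSup_le (hne y) (by rintro _ ⟨x, -, rfl⟩; exact hcle x)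
      linarith
  · intro h hh
    rintro ⟨y, t⟩ hp
    have ht : t = h y := hp
    subst ht
    have hlt : |g y - h y| < ε y := hh y
    obtain ⟨_, ⟨x, hyV, rfl⟩, hxlt⟩ := exists_lt_of_lt_csSup (hne y) hlt
    have h1 : |g y - h y| < δ x / 2 := lt_of_lt_of_le hxlt (min_le_right _ _)
    have h2 : |g y - g x| < δ x / 2 := hclose x y hyV
    have : |h y - g x| < δ x := by
      have := abs_sub_abs_le_abs_sub (g y - g x) (g y - h y)
      have htriangle : |h y - g x| ≤ |g y - h y| + |g y - g x| := by
        have := abs_sub (h y) (g x)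
        calc |h y - g x| = |(g y - g x) - (g y - h y)| := by ring_nf
          _ ≤ |g y - g x| + |g y - h y| := abs_sub _ _
          _ = |g y - h y| + |g y - g x| := by ring
      linarith
    exact hin x y hyV (h y) this

/-- Every generate-open set is a union of balls around its points. -/
lemma nhds_ball {X : Type*} [TopologicalSpace X] :
    ∀ U : Set C(X, ℝ), GenerateOpen
      {S | ∃ G : Set (X × ℝ), IsOpen G ∧ S = {f : C(X, ℝ) | graphSet f ⊆ G}} U →
      ∀ g ∈ U, ∃ ε : X → ℝ, LowerSemicontinuous ε ∧ (∀ x, ε x ∈ Set.Ioo (0 : ℝ) 1) ∧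
        {h : C(X, ℝ) | ∀ x, |g x - h x| < ε x} ⊆ U := by
  intro U hU
  induction hU with
  | basic S hS =>
    obtain ⟨G, hG, rfl⟩ := hS
    intro g hg
    obtain ⟨ε, h1, h2, h3⟩ := key_construction G hG g hg
    exact ⟨ε, h1, h2, fun h hh => h3 h hh⟩
  | univ =>
    intro g _
    exact ⟨fun _ => 1 / 2, lowerSemicontinuous_const, fun x => by norm_num,
      fun h _ => mem_univ h⟩
  | inter U₁ U₂ _ _ ih₁ ih₂ =>
    intro g hg
    obtain ⟨ε₁, l₁, m₁, s₁⟩ := ih₁ g hg.1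
    obtain ⟨ε₂, l₂, m₂, s₂⟩ := ih₂ g hg.2
    refine ⟨fun x => min (ε₁ x) (ε₂ x), ?_, ?_, ?_⟩
    · intro x b hb
      have hb1 : b < ε₁ x := lt_of_lt_of_le hb (min_le_left _ _)
      have hb2 : b < ε₂ x := lt_of_lt_of_le hb (min_le_right _ _)
      filter_upwards [l₁ x b hb1, l₂ x b hb2] with y h1 h2
      exact lt_min h1 h2
    · exact fun x => ⟨lt_min (m₁ x).1 (m₂ x).1, lt_of_le_of_lt (min_le_left _ _) (m₁ x).2⟩
    · intro h hh
      exact ⟨s₁ fun x => lt_of_lt_of_le (hh x) (min_le_left _ _),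
        s₂ fun x => lt_of_lt_of_le (hh x) (min_le_right _ _)⟩
  | sUnion 𝒮 _ ih =>
    intro g hg
    obtain ⟨U, hU𝒮, hgU⟩ := hg
    obtain ⟨ε, l, m, s⟩ := ih U hU𝒮 g hgU
    exact ⟨ε, l, m, fun h hh => ⟨U, hU𝒮, s hh⟩⟩

/-- Each ball is a set of the form `F_G`. -/
lemma ball_eq_FG {X : Type*} [TopologicalSpace X] (f : C(X, ℝ)) (ε : X → ℝ)
    (hlsc : LowerSemicontinuous ε) :
    ∃ G : Set (X × ℝ), IsOpen G ∧
      {g : C(X, ℝ) | ∀ x, |f x - g x| < ε x} = {g : C(X, ℝ) | graphSet g ⊆ G} := by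
  refine ⟨{p : X × ℝ | |f p.1 - p.2| < ε p.1}, ?_, ?_⟩
  · rw [isOpen_iff_mem_nhds]
    rintro ⟨a, b⟩ hab
    simp only [mem_setOf_eq] at hab
    obtain ⟨r, hr1, hr2⟩ := exists_between hab
    have h1 : ∀ᶠ p : X × ℝ in nhds (a, b), |f p.1 - p.2| < r := by
      have hcont : Continuous fun p : X × ℝ => |f p.1 - p.2| :=
        ((f.continuous.comp continuous_fst).sub continuous_snd).abs
      have := hcont.continuousAt (x := (a, b))
      exact this.eventually_lt continuousAt_const hr1
    have h2 : ∀ᶠ p : X × ℝ in nhds (a, b), r < ε p.1 := by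
      have hlsc' : LowerSemicontinuous fun p : X × ℝ => ε p.1 :=
        hlsc.comp continuous_fst
      exact hlsc' (a, b) r hr2
    filter_upwards [h1, h2] with p hp1 hp2
    exact lt_trans hp1 hp2
  · ext g
    simp only [mem_setOf_eq, graphSet]
    constructor
    · rintro hg ⟨x, t⟩ (ht : t = g x)
      subst ht
      exact hg x
    · intro hg x
      exact hg (show ((x, g x) : X × ℝ) ∈ {p : X × ℝ | p.2 = g p.1} from rfl)

/-- the sets `B(f, ε) = {g ∈ C(X) : |f x - g x| < ε x for all x}`, with
`f ∈ C(X)` and `ε : X → (0,1)` lower semicontinuous, form a base for `(C(X), τ_Γ)`. -/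
theorem isTopologicalBasis_balls (X : Type*) [TopologicalSpace X] :
    @IsTopologicalBasis C(X, ℝ) (graphTopology X ℝ)
      {S | ∃ (f : C(X, ℝ)) (ε : X → ℝ), LowerSemicontinuous ε ∧
        (∀ x, ε x ∈ Set.Ioo (0 : ℝ) 1) ∧
        S = {g : C(X, ℝ) | ∀ x, |f x - g x| < ε x}} := by
  letI : TopologicalSpace C(X, ℝ) := graphTopology X ℝ
  refine isTopologicalBasis_of_isOpen_of_nhds ?_ ?_
  · rintro S ⟨f, ε, hlsc, hIoo, rfl⟩
    obtain ⟨G, hG, hEq⟩ := ball_eq_FG f ε hlsc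
    rw [hEq]
    exact TopologicalSpace.GenerateOpen.basic _ ⟨G, hG, rfl⟩
  · intro g U hgU hUopen
    have hgen : GenerateOpen
        {S | ∃ G : Set (X × ℝ), IsOpen G ∧ S = {f : C(X, ℝ) | graphSet f ⊆ G}} U := hUopen
    obtain ⟨ε, hlsc, hIoo, hsub⟩ := nhds_ball U hgen g hgU
    refine ⟨{h : C(X, ℝ) | ∀ x, |g x - h x| < ε x}, ⟨g, ε, hlsc, hIoo, rfl⟩, ?_, hsub⟩
    intro x
    simpa using (hIoo x).1
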